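/- arXiv:2106.03349 — 2 statements merged into one kernel-verified Lean document; each statement's English description precedes it below -/
import Mathlib

section
/- Let V be a finite alphabet, let M be a finite set of full quadtrees of depth at most d_max on the blocks of a 2^{d_max} × 2^{d_max} grid, and for each block s let Θ_s be a finite parameter set with a pmf p_s on Θ_s and conditional pmfs p(v | v^{t−1}, θ_s) on V for θ_s ∈ Θ_s. For a model m, let the parameter tuple θ^m = (θ_s)_{s ∈ L^m} have prior p(θ^m | m) = ∏_{s ∈ L^m} p_s(θ_s), and let the data likelihood be p(v^t | θ^m, m) = ∏_{i ≤ t} p(v_i | v^{i−1}, θ_{s(i)}) where s(i) is the unique leaf of m whose block contains pixel i. Then for any two models m, m' ∈ M, any block s that is a leaf of both m and m', and any sequence v^t with the pixel at time t contained in s and with p(v^{t−1} | m) > 0 and p(v^{t−1} | m') > 0, the predictive distributions coincide: p(v_t | v^{t−1}, m) = p(v_t | v^{t−1}, m'), where p(v_t | v^{t−1}, m) = ∑_{θ^m} p(v_t | v^{t−1}, θ_{s}) p(θ^m | v^{t−1}, m). Hence this common value, denoted q̃(v_t | v^{t−1}, s), depends only on the block s and not on the model m. -/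
inductive FullTree (k : ℕ) : ℕ → Type where
  | leaf {D : ℕ} : FullTree k D
  | node {D : ℕ} (c : Fin k → FullTree k D) : FullTree k (D + 1)

namespace FullTree

def equivZero (k : ℕ) : FullTree k 0 ≃ Unit where
  toFun _ := ()
  invFun _ := .leaf
  left_inv t := by cases t; rfl
  right_inv _ := rfl

def equivSucc (k D : ℕ) : FullTree k (D + 1) ≃ Option (Fin k → FullTree k D) where
  toFun t := match t with
    | .leaf => none
    | .node c => some c
  invFun o := match o with
    | none => .leaf
    | some c => .node c
  left_inv t := by cases t <;> rfl
  right_inv o := by cases o <;> rfl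

instance instFintype (k : ℕ) : (D : ℕ) → Fintype (FullTree k D)
  | 0 => Fintype.ofEquiv Unit (equivZero k).symm
  | (D + 1) => letI := instFintype k D; Fintype.ofEquiv _ (equivSucc k D).symm

noncomputable instance (k D : ℕ) : DecidableEq (FullTree k D) := Classical.decEq _

/-- The set of (paths to) leaf nodes of a full subtree whose root has path `u`. -/
def leaves {k : ℕ} : {D : ℕ} → List (Fin k) → FullTree k D → Finset (List (Fin k))
  | _, u, .leaf => {u}
  | _, u, .node c => Finset.univ.biUnion fun i => leaves (u ++ [i]) (c i)

/-- The set of (paths to) inner nodes of a full subtree whose root has path `u`. -/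
def inners {k : ℕ} : {D : ℕ} → List (Fin k) → FullTree k D → Finset (List (Fin k))
  | _, _, .leaf => ∅
  | _, u, .node c => insert u (Finset.univ.biUnion fun i => inners (u ++ [i]) (c i))

/-- The weight ∏_{u ∈ L^T} (1 - g u) * ∏_{u ∈ I^T} g u of a full subtree rooted at path `u`. -/
noncomputable def weight {k D : ℕ} (g : List (Fin k) → ℝ) (u : List (Fin k))
    (T : FullTree k D) : ℝ :=
  (∏ s ∈ leaves u T, (1 - g s)) * ∏ s ∈ inners u T, g s

end FullTree

namespace FullTree

/-- Follow the path `p` down the full subtree `T` (whose root has path `u`) until a leaf of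
`T` is reached; returns the path of that leaf.  For a pixel `p` (a path of full length
`dmax`), `leafOf [] m p` is the unique leaf block of `m` containing the pixel `p`. -/
def leafOf {k : ℕ} : {D : ℕ} → List (Fin k) → FullTree k D → List (Fin k) → List (Fin k)
  | _, u, .leaf, _ => u
  | _, u, .node _, [] => u
  | _, u, .node c, i :: p => leafOf (u ++ [i]) (c i) p

end FullTree

/-- `jointP dmax V Θ ps f v pix m t` is the marginal likelihood
`p(v^{t-1} | m) = ∑_{θ^m} p(θ^m | m) p(v^{t-1} | θ^m, m)` of the first `t` pixel values
under model `m`, where the parameter tuple `θ^m = (θ_s)_{s ∈ L^m}` has prior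
`∏_{s ∈ L^m} ps s (θ_s)` and the likelihood is `∏_{i < t} f i (s_m(i)) (θ_{s_m(i)}) (v i)`,
grouped here by the leaf `s = s_m(i)` containing pixel `i`. -/
noncomputable def jointP (dmax : ℕ) (V : Type) [Fintype V]
    (Θ : List (Fin 4) → Type) [∀ s, Fintype (Θ s)]
    (ps : (s : List (Fin 4)) → Θ s → ℝ)
    (f : ℕ → (s : List (Fin 4)) → Θ s → V → ℝ)
    (v : ℕ → V) (pix : ℕ → List (Fin 4))
    (m : FullTree 4 dmax) (t : ℕ) : ℝ :=
  ∑ θm : (s : {s // s ∈ FullTree.leaves ([] : List (Fin 4)) m}) → Θ s.val,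
    ∏ s : {s // s ∈ FullTree.leaves ([] : List (Fin 4)) m},
      ps s.val (θm s) *
        ∏ i ∈ (Finset.range t).filter (fun i => FullTree.leafOf [] m (pix i) = s.val),
          f i s.val (θm s) (v i)


namespace FullTree

theorem prefix_of_mem_leaves {k : ℕ} : ∀ {D : ℕ} (u : List (Fin k)) (T : FullTree k D)
    {s : List (Fin k)}, s ∈ leaves u T → u <+: s
  | _, u, .leaf, s, hs => by
      simp only [leaves, Finset.mem_singleton] at hs
      simp [hs]
  | _, u, .node c, s, hs => by
      simp only [leaves, Finset.mem_biUnion, Finset.mem_univ, true_and] at hs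
      obtain ⟨i, hi⟩ := hs
      exact (u.prefix_append [i]).trans (prefix_of_mem_leaves _ _ hi)

theorem leafOf_prefix {k : ℕ} : ∀ {D : ℕ} (u : List (Fin k)) (T : FullTree k D)
    (p : List (Fin k)), leafOf u T p <+: u ++ p
  | _, u, .leaf, p => by simp [leafOf]
  | _, u, .node c, [] => by simp [leafOf]
  | _, u, .node c, i :: p => by
      simpa [leafOf] using leafOf_prefix (u ++ [i]) (c i) p

theorem leafOf_eq_of_prefix {k : ℕ} : ∀ {D : ℕ} (u : List (Fin k)) (T : FullTree k D)
    (p s : List (Fin k)), s ∈ leaves u T → s <+: u ++ p → leafOf u T p = s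
  | _, u, .leaf, p, s, hs, _ => by
      simp only [leaves, Finset.mem_singleton] at hs
      simp [leafOf, hs]
  | _, u, .node c, [], s, hs, hp => by
      simp only [leaves, Finset.mem_biUnion, Finset.mem_univ, true_and] at hs
      obtain ⟨i, hi⟩ := hs
      have h1 : u ++ [i] <+: s := prefix_of_mem_leaves _ _ hi
      have h2 : s <+: u := by simpa using hp
      have h3 : u.length + 1 ≤ s.length := by simpa using h1.length_le
      have h4 : s.length ≤ u.length := h2.length_le
      omega
  | _, u, .node c, j :: p, s, hs, hp => by
      simp only [leaves, Finset.mem_biUnion, Finset.mem_univ, true_and] at hs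
      obtain ⟨i, hi⟩ := hs
      have h1 : u ++ [i] <+: u ++ j :: p := (prefix_of_mem_leaves _ _ hi).trans hp
      have h2 : [i] <+: j :: p := (List.prefix_append_right_inj u).mp h1
      have hij : i = j := by
        rcases h2 with ⟨r, hr⟩
        simpa using congrArg (fun l => l.head?) hr
      subst hij
      simp only [leafOf]
      exact leafOf_eq_of_prefix (u ++ [i]) (c i) p s hi (by simpa using hp)

end FullTree

open Classical in
/-- per-leaf factor of the marginal likelihood, independent of the model. -/
noncomputable def stmt7B (V : Type) [Fintype V]
    (Θ : List (Fin 4) → Type) [∀ s, Fintype (Θ s)]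
    (ps : (s : List (Fin 4)) → Θ s → ℝ)
    (f : ℕ → (s : List (Fin 4)) → Θ s → V → ℝ)
    (v : ℕ → V) (pix : ℕ → List (Fin 4)) (s : List (Fin 4)) (t : ℕ) : ℝ :=
  ∑ θ : Θ s, ps s θ * ∏ i ∈ (Finset.range t).filter (fun i => s <+: pix i), f i s θ (v i)

theorem stmt7B_nonneg (V : Type) [Fintype V]
    (Θ : List (Fin 4) → Type) [∀ s, Fintype (Θ s)]
    (ps : (s : List (Fin 4)) → Θ s → ℝ) (hps : ∀ s θ, 0 ≤ ps s θ)
    (f : ℕ → (s : List (Fin 4)) → Θ s → V → ℝ) (hf : ∀ i s θ x, 0 ≤ f i s θ x)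
    (v : ℕ → V) (pix : ℕ → List (Fin 4)) (s : List (Fin 4)) (t : ℕ) :
    0 ≤ stmt7B V Θ ps f v pix s t := by
  refine Finset.sum_nonneg fun θ _ => mul_nonneg (hps s θ) ?_
  exact Finset.prod_nonneg fun i _ => hf i s θ (v i)

open Classical in
theorem jointP_eq_prod (dmax : ℕ) (V : Type) [Fintype V]
    (Θ : List (Fin 4) → Type) [∀ s, Fintype (Θ s)]
    (ps : (s : List (Fin 4)) → Θ s → ℝ)
    (f : ℕ → (s : List (Fin 4)) → Θ s → V → ℝ)
    (v : ℕ → V) (pix : ℕ → List (Fin 4))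
    (m : FullTree 4 dmax) (t : ℕ) :
    jointP dmax V Θ ps f v pix m t
      = ∏ s ∈ FullTree.leaves ([] : List (Fin 4)) m, stmt7B V Θ ps f v pix s t := by
  unfold jointP
  rw [← Finset.prod_coe_sort (FullTree.leaves ([] : List (Fin 4)) m)
      (fun s => stmt7B V Θ ps f v pix s t)]
  rw [← Fintype.prod_sum (fun (s : {s // s ∈ FullTree.leaves ([] : List (Fin 4)) m})
      (θ : Θ s.val) => ps s.val θ *
        ∏ i ∈ (Finset.range t).filter (fun i => FullTree.leafOf [] m (pix i) = s.val),
          f i s.val θ (v i))]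
  refine Finset.prod_congr rfl fun s _ => ?_
  unfold stmt7B
  refine Finset.sum_congr rfl fun θ _ => ?_
  congr 1
  refine Finset.prod_congr ?_ fun i _ => rfl
  refine Finset.filter_congr fun i _ => ?_
  constructor
  · intro h
    rw [← h]
    simpa using FullTree.leafOf_prefix ([] : List (Fin 4)) m (pix i)
  · intro h
    exact FullTree.leafOf_eq_of_prefix [] m (pix i) s.val s.prop (by simpa using h)

open Classical in
theorem ratio_eq (dmax : ℕ) (V : Type) [Fintype V]
    (Θ : List (Fin 4) → Type) [∀ s, Fintype (Θ s)]
    (ps : (s : List (Fin 4)) → Θ s → ℝ) (hps : ∀ s θ, 0 ≤ ps s θ)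
    (f : ℕ → (s : List (Fin 4)) → Θ s → V → ℝ) (hf : ∀ i s θ x, 0 ≤ f i s θ x)
    (v : ℕ → V) (pix : ℕ → List (Fin 4))
    (m : FullTree 4 dmax) (s : List (Fin 4))
    (hsm : s ∈ FullTree.leaves ([] : List (Fin 4)) m)
    (t : ℕ) (hts : s <+: pix t)
    (hpos : 0 < jointP dmax V Θ ps f v pix m t) :
    jointP dmax V Θ ps f v pix m (t + 1) / jointP dmax V Θ ps f v pix m t
      = stmt7B V Θ ps f v pix s (t + 1) / stmt7B V Θ ps f v pix s t := by
  have hB : ∀ s' ∈ (FullTree.leaves ([] : List (Fin 4)) m).erase s,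
      stmt7B V Θ ps f v pix s' (t + 1) = stmt7B V Θ ps f v pix s' t := by
    intro s' hs'
    have hns : s' ≠ s := (Finset.mem_erase.mp hs').1
    have hs'm : s' ∈ FullTree.leaves ([] : List (Fin 4)) m := (Finset.mem_erase.mp hs').2
    have hnot : ¬ (s' <+: pix t) := by
      intro h
      apply hns
      have h1 : FullTree.leafOf [] m (pix t) = s' :=
        FullTree.leafOf_eq_of_prefix [] m (pix t) s' hs'm (by simpa using h)
      have h2 : FullTree.leafOf [] m (pix t) = s :=
        FullTree.leafOf_eq_of_prefix [] m (pix t) s hsm (by simpa using hts)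
      rw [← h1, h2]
    unfold stmt7B
    refine Finset.sum_congr rfl fun θ _ => ?_
    congr 2
    rw [Finset.range_add_one, Finset.filter_insert, if_neg hnot]
  rw [jointP_eq_prod, jointP_eq_prod,
    ← Finset.mul_prod_erase _ _ hsm, ← Finset.mul_prod_erase _ _ hsm,
    Finset.prod_congr rfl hB]
  have hPpos : (0:ℝ) < ∏ s' ∈ (FullTree.leaves ([] : List (Fin 4)) m).erase s,
      stmt7B V Θ ps f v pix s' t := by
    rcases lt_or_eq_of_le (Finset.prod_nonneg
      (fun s' _ => stmt7B_nonneg V Θ ps hps f hf v pix s' t)) with h | h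
    · exact h
    · exfalso
      rw [jointP_eq_prod, ← Finset.mul_prod_erase _ _ hsm, ← h, mul_zero] at hpos
      exact lt_irrefl 0 hpos
  rw [mul_div_mul_right _ _ (ne_of_gt hPpos)]

/-- Lemma 1.  Blocks are encoded by their quadrant paths `List (Fin 4)` of
length `≤ dmax`, pixels by paths of full length `dmax`, and `pix i` is the pixel observed at
time `i` (raster scan).  If a block `s` is a leaf of both models `m` and `m'`, and the pixel
at time `t` is contained in `s` (i.e. `s` is a prefix of the pixel path `pix t`), and
`p(v^{t-1} | m) > 0`, `p(v^{t-1} | m') > 0`, then the posterior predictive probabilities of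
the next pixel value coincide:
`p(v_t | v^{t-1}, m) = p(v^t | m) / p(v^{t-1} | m)` equals the same ratio for `m'`. -/

theorem stmt7 (dmax : ℕ) (V : Type) [Fintype V]
    (Θ : List (Fin 4) → Type) [∀ s, Fintype (Θ s)]
    (ps : (s : List (Fin 4)) → Θ s → ℝ)
    (hps : ∀ s θ, 0 ≤ ps s θ) (hpss : ∀ s, ∑ θ : Θ s, ps s θ = 1)
    (f : ℕ → (s : List (Fin 4)) → Θ s → V → ℝ)
    (hf : ∀ i s θ x, 0 ≤ f i s θ x) (hfs : ∀ i s θ, ∑ x : V, f i s θ x = 1)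
    (v : ℕ → V) (pix : ℕ → List (Fin 4))
    (hpix : ∀ i, (pix i).length = dmax)
    (m m' : FullTree 4 dmax) (s : List (Fin 4))
    (hsm : s ∈ FullTree.leaves ([] : List (Fin 4)) m)
    (hsm' : s ∈ FullTree.leaves ([] : List (Fin 4)) m')
    (t : ℕ) (hts : s <+: pix t)
    (hpos : 0 < jointP dmax V Θ ps f v pix m t)
    (hpos' : 0 < jointP dmax V Θ ps f v pix m' t) :
    jointP dmax V Θ ps f v pix m (t + 1) / jointP dmax V Θ ps f v pix m t
      = jointP dmax V Θ ps f v pix m' (t + 1) / jointP dmax V Θ ps f v pix m' t := by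
  rw [ratio_eq dmax V Θ ps hps f hf v pix m s hsm t hts hpos,
    ratio_eq dmax V Θ ps hps f hf v pix m' s hsm' t hts hpos']
end

section
/- Let V be a finite alphabet and consider the complete quadtree of depth d_max on the blocks of a 2^{d_max} × 2^{d_max} grid, with hyperparameters g_s ∈ [0,1] on the blocks, g_s = 0 for blocks of cardinality 1, and model prior p(m) = ∏_{s ∈ L^m}(1 − g_s) ∏_{s' ∈ I^m} g_{s'} on the set M of full quadtrees of depth ≤ d_max. Suppose for each block s and each time t there is a strictly positive conditional pmf q̃(· | v^{t−1}, s) on V, and for a model m the likelihood of data is p(v^t | m) = ∏_{i ≤ t} q̃(v_i | v^{i−1}, s_m(i)), where s_m(i) is the unique leaf of m containing pixel i. Define g_{s|−1} := g_s, and for t ≥ 0 define recursively q(v_t | v^{t−1}, s) := q̃(v_t | v^{t−1}, s) if |s| = 1, and q(v_t | v^{t−1}, s) := (1 − g_{s|t−1}) q̃(v_t | v^{t−1}, s) + g_{s|t−1} q(v_t | v^{t−1}, s_child) otherwise, where s_child is the child of s on the path S_t of blocks containing pixel t; and update g_{s|t} := g_{s|t−1} if s ∉ S_t or |s| = 1,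 and g_{s|t} := g_{s|t−1} q(v_t | v^{t−1}, s_child) / q(v_t | v^{t−1}, s) if s ∈ S_t and |s| > 1. Then for every t, the Bayes optimal coding probability q*(v_t | v^{t−1}) := ∑_{m ∈ M} p(m | v^{t−1}) q̃(v_t | v^{t−1}, s_m(t)) equals q(v_t | v^{t−1}, s_λ), where p(m | v^{t−1}) ∝ p(m) p(v^{t−1} | m) and s_λ is the root block. -/
/-- The likelihood `p(v^{t-1} | m) = ∏_{i < t} q̃(v_i | v^{i-1}, s_m(i))` of the first `t`
pixel values under model `m`, where `qt i s x = q̃(x | v^{i-1}, s)` is the per-block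
predictive pmf and `s_m(i)` the unique leaf of `m` containing pixel `i`. -/
noncomputable def like (dmax : ℕ) {V : Type} (qt : ℕ → List (Fin 4) → V → ℝ)
    (v : ℕ → V) (pix : ℕ → List (Fin 4)) (m : FullTree 4 dmax) (t : ℕ) : ℝ :=
  ∏ i ∈ Finset.range t, qt i (FullTree.leafOf [] m (pix i)) (v i)

/-- `Qd dmax qt v pix G t j` is the recursively mixed coding probability
`q(v_t | v^{t-1}, s)` at the block `s = (pix t).take (dmax - j)` on the path `S_t` of blocks
containing pixel `t` (`j` is the distance from `s` down to the singleton block of `S_t`),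
computed with the current weights `G = g_{·|t-1}`:
`q = q̃` at singleton blocks and `q = (1 - g_{s|t-1}) q̃ + g_{s|t-1} q(child)` otherwise. -/
noncomputable def Qd (dmax : ℕ) {V : Type} (qt : ℕ → List (Fin 4) → V → ℝ)
    (v : ℕ → V) (pix : ℕ → List (Fin 4)) (G : List (Fin 4) → ℝ) (t : ℕ) : ℕ → ℝ
  | 0 => qt t ((pix t).take dmax) (v t)
  | j + 1 =>
    (1 - G ((pix t).take (dmax - (j + 1)))) * qt t ((pix t).take (dmax - (j + 1))) (v t)
      + G ((pix t).take (dmax - (j + 1))) * Qd dmax qt v pix G t j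

/-- One step of the weight update: `g_{s|t} = g_{s|t-1}` if `s ∉ S_t` or `|s| = 1`
(`s ∈ S_t` iff `s` is a prefix of the pixel path `pix t`; `|s| = 1` iff `s.length = dmax`),
and `g_{s|t} = g_{s|t-1} · q(v_t | v^{t-1}, s_child) / q(v_t | v^{t-1}, s)` otherwise. -/
noncomputable def Gnext (dmax : ℕ) {V : Type} (qt : ℕ → List (Fin 4) → V → ℝ)
    (v : ℕ → V) (pix : ℕ → List (Fin 4)) (G : List (Fin 4) → ℝ) (t : ℕ)
    (s : List (Fin 4)) : ℝ :=
  if s <+: pix t ∧ s.length < dmax then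
    G s * Qd dmax qt v pix G t (dmax - s.length - 1) / Qd dmax qt v pix G t (dmax - s.length)
  else G s

/-- `GT dmax qt v pix g t s = g_{s|t-1}`: the sequentially updated weights, with
`GT ... 0 s = g_{s|-1} = g s`. -/
noncomputable def GT (dmax : ℕ) {V : Type} (qt : ℕ → List (Fin 4) → V → ℝ)
    (v : ℕ → V) (pix : ℕ → List (Fin 4)) (g : List (Fin 4) → ℝ) : ℕ → List (Fin 4) → ℝ
  | 0 => g
  | t + 1 => Gnext dmax qt v pix (GT dmax qt v pix g t) t

/- ===================== auxiliary development ===================== -/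

theorem prefix_snoc_iff (u l : List (Fin 4)) (j : Fin 4) (h : u.length < l.length) :
    u ++ [j] <+: l ↔ u <+: l ∧ l[u.length] = j := by
  constructor
  · rintro ⟨r, hr⟩
    have h1 : u <+: l := ⟨j :: r, by simpa using hr⟩
    refine ⟨h1, ?_⟩
    subst hr
    simp [List.getElem_append]
  · rintro ⟨⟨r, hr⟩, hj⟩
    subst hr
    simp [List.getElem_append] at hj h
    refine ⟨r.tail, ?_⟩
    cases r with
    | nil => simp at h
    | cons a r => simp_all

namespace FullTree

theorem mem_leaves_prefix {k : ℕ} : ∀ {D : ℕ} (u s : List (Fin k)) (T : FullTree k D),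
    s ∈ leaves u T → u <+: s
  | _, u, s, .leaf, h => by simp [leaves] at h; simp [h]
  | _, u, s, .node c, h => by
    simp only [leaves, Finset.mem_biUnion, Finset.mem_univ, true_and] at h
    obtain ⟨i, hi⟩ := h
    exact ((u.prefix_append [i]).trans (mem_leaves_prefix _ s (c i) hi))

theorem mem_inners_prefix {k : ℕ} : ∀ {D : ℕ} (u s : List (Fin k)) (T : FullTree k D),
    s ∈ inners u T → u <+: s
  | _, u, s, .leaf, h => by simp [inners] at h
  | _, u, s, .node c, h => by
    simp only [inners, Finset.mem_insert, Finset.mem_biUnion, Finset.mem_univ, true_and] at h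
    rcases h with h | ⟨i, hi⟩
    · simp [h]
    · exact ((u.prefix_append [i]).trans (mem_inners_prefix _ s (c i) hi))

theorem snoc_disjoint {k : ℕ} (u : List (Fin k)) {i j : Fin k} (hij : i ≠ j)
    {A B : Finset (List (Fin k))} (hA : ∀ s ∈ A, u ++ [i] <+: s) (hB : ∀ s ∈ B, u ++ [j] <+: s) :
    Disjoint A B := by
  rw [Finset.disjoint_left]
  intro s hsA hsB
  have h1 := hA s hsA
  have h2 := hB s hsB
  have := (List.prefix_of_prefix_length_le h1 h2 (by simp)).eq_of_length (by simp)
  simp at this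
  exact hij this

theorem weight_node {k D : ℕ} (g : List (Fin k) → ℝ) (u : List (Fin k))
    (c : Fin k → FullTree k D) :
    weight g u (.node c) = g u * ∏ j, weight g (u ++ [j]) (c j) := by
  unfold weight
  rw [show (leaves u (.node c)) = Finset.univ.biUnion fun i => leaves (u ++ [i]) (c i) from rfl,
    show (inners u (.node c)) = insert u (Finset.univ.biUnion fun i => inners (u ++ [i]) (c i))
      from rfl]
  rw [Finset.prod_biUnion, Finset.prod_insert, Finset.prod_biUnion]
  · rw [Finset.prod_mul_distrib]; ring
  · intro i _ j _ hij
    exact snoc_disjoint u hij (fun s hs => mem_inners_prefix _ s _ hs)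
      (fun s hs => mem_inners_prefix _ s _ hs)
  · simp only [Finset.mem_biUnion, Finset.mem_univ, true_and, not_exists]
    intro i hi
    have := (mem_inners_prefix _ u (c i) hi).length_le
    simp at this
  · intro i _ j _ hij
    exact snoc_disjoint u hij (fun s hs => mem_leaves_prefix _ s _ hs)
      (fun s hs => mem_leaves_prefix _ s _ hs)

theorem sum_tree_zero {k : ℕ} (f : FullTree k 0 → ℝ) : ∑ T : FullTree k 0, f T = f .leaf := by
  rw [← Equiv.sum_comp (equivZero k).symm f]
  simp [equivZero]

theorem sum_tree_succ {k D : ℕ} (f : FullTree k (D + 1) → ℝ) :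
    ∑ T : FullTree k (D + 1), f T = f .leaf + ∑ c : Fin k → FullTree k D, f (.node c) := by
  rw [← Equiv.sum_comp (equivSucc k D).symm f]
  rw [Fintype.sum_option]
  rfl

end FullTree

theorem mix_pos {a x y : ℝ} (h0 : 0 ≤ a) (h1 : a ≤ 1) (hx : 0 < x) (hy : 0 < y) :
    0 < (1 - a) * x + a * y := by
  rcases eq_or_lt_of_le h1 with h | h
  · rw [h]; simpa using hy
  · have h2 : 0 < (1 - a) * x := mul_pos (by linarith) hx
    nlinarith [mul_nonneg h0 hy.le]

set_option linter.unusedSectionVars false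

section Dev

variable {V : Type} [Fintype V]
  (qt : ℕ → List (Fin 4) → V → ℝ) (v : ℕ → V) (pix : ℕ → List (Fin 4))
  (g : List (Fin 4) → ℝ)

/-- `Ed u t = ∏_{i<t, u ∈ S_i} q̃(v_i | v^{i-1}, u)`. -/
noncomputable def Ed (u : List (Fin 4)) (t : ℕ) : ℝ :=
  ∏ i ∈ Finset.range t, if u <+: pix i then qt i u (v i) else 1

/-- `Ld u T t`: likelihood of the subtree model `T` rooted at `u` on pixels in its block. -/
noncomputable def Ld {D : ℕ} (u : List (Fin 4)) (T : FullTree 4 D) (t : ℕ) : ℝ :=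
  ∏ i ∈ Finset.range t,
    if u <+: pix i then qt i (FullTree.leafOf u T ((pix i).drop u.length)) (v i) else 1

/-- `Wd D u t`: mixture likelihood over all subtree models of depth `≤ D` rooted at `u`. -/
noncomputable def Wd (D : ℕ) (u : List (Fin 4)) (t : ℕ) : ℝ :=
  ∑ T : FullTree 4 D, FullTree.weight g u T * Ld qt v pix u T t

theorem Ld_leaf {D : ℕ} (u : List (Fin 4)) (t : ℕ) :
    Ld qt v pix u (.leaf : FullTree 4 D) t = Ed qt v pix u t := by
  unfold Ld Ed
  refine Finset.prod_congr rfl fun i _ => ?_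
  simp [FullTree.leafOf]

theorem Ld_node {D : ℕ} (u : List (Fin 4)) (c : Fin 4 → FullTree 4 D) (t : ℕ)
    (hlen : ∀ i, u.length < (pix i).length) :
    Ld qt v pix u (.node c) t = ∏ j, Ld qt v pix (u ++ [j]) (c j) t := by
  unfold Ld
  rw [Finset.prod_comm]
  refine Finset.prod_congr rfl fun i _ => ?_
  by_cases h : u <+: pix i
  · have hd : (pix i).drop u.length
        = (pix i)[u.length]'(hlen i) :: (pix i).drop (u.length + 1) :=
      List.drop_eq_getElem_cons (hlen i)
    rw [Finset.prod_eq_single ((pix i)[u.length]'(hlen i))]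
    · rw [if_pos ((prefix_snoc_iff u (pix i) _ (hlen i)).2 ⟨h, rfl⟩), if_pos h, hd]
      simp [FullTree.leafOf]
    · intro j _ hj
      rw [if_neg]
      intro hc
      exact hj ((prefix_snoc_iff u (pix i) j (hlen i)).1 hc).2.symm
    · simp
  · rw [if_neg h]
    rw [Finset.prod_eq_one]
    intro j _
    rw [if_neg]
    intro hc
    exact h ((prefix_snoc_iff u (pix i) j (hlen i)).1 hc).1

theorem Ld_succ {D : ℕ} (u : List (Fin 4)) (T : FullTree 4 D) (t : ℕ) :
    Ld qt v pix u T (t + 1) = Ld qt v pix u T t *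
      if u <+: pix t then qt t (FullTree.leafOf u T ((pix t).drop u.length)) (v t) else 1 :=
  Finset.prod_range_succ _ _

theorem Ed_succ (u : List (Fin 4)) (t : ℕ) :
    Ed qt v pix u (t + 1) = Ed qt v pix u t * if u <+: pix t then qt t u (v t) else 1 :=
  Finset.prod_range_succ _ _

theorem Ed_zero (u : List (Fin 4)) : Ed qt v pix u 0 = 1 := rfl

theorem Ed_pos (hqt : ∀ t s x, 0 < qt t s x) (u : List (Fin 4)) (t : ℕ) :
    0 < Ed qt v pix u t := by
  refine Finset.prod_pos fun i _ => ?_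
  split <;> [exact hqt _ _ _; exact one_pos]

theorem Wd_zero (u : List (Fin 4)) (t : ℕ) :
    Wd qt v pix g 0 u t = (1 - g u) * Ed qt v pix u t := by
  unfold Wd
  rw [FullTree.sum_tree_zero, Ld_leaf]
  simp [FullTree.weight, FullTree.leaves, FullTree.inners]

theorem Wd_succ {D : ℕ} (u : List (Fin 4)) (t : ℕ)
    (hlen : ∀ i, u.length < (pix i).length) :
    Wd qt v pix g (D + 1) u t
      = (1 - g u) * Ed qt v pix u t + g u * ∏ j, Wd qt v pix g D (u ++ [j]) t := by
  unfold Wd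
  rw [FullTree.sum_tree_succ]
  congr 1
  · rw [Ld_leaf]
    simp [FullTree.weight, FullTree.leaves, FullTree.inners]
  · have key : ∀ c : Fin 4 → FullTree 4 D,
        FullTree.weight g u (.node c) * Ld qt v pix u (.node c) t
          = g u * ∏ j, (FullTree.weight g (u ++ [j]) (c j) * Ld qt v pix (u ++ [j]) (c j) t) := by
      intro c
      rw [FullTree.weight_node, Ld_node qt v pix u c t hlen, mul_assoc,
        ← Finset.prod_mul_distrib]
    simp_rw [key]
    rw [← Finset.mul_sum]
    congr 1
    rw [Finset.prod_univ_sum]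
    rw [Fintype.piFinset_univ]

theorem Wd_unchanged {D : ℕ} (u : List (Fin 4)) (t : ℕ) (h : ¬ u <+: pix t) :
    Wd qt v pix g D u (t + 1) = Wd qt v pix g D u t := by
  unfold Wd
  refine Finset.sum_congr rfl fun T _ => ?_
  rw [Ld_succ, if_neg h, mul_one]

end Dev

section Main

variable {V : Type} [Fintype V]
  (dmax : ℕ) (qt : ℕ → List (Fin 4) → V → ℝ) (v : ℕ → V) (pix : ℕ → List (Fin 4))
  (g : List (Fin 4) → ℝ)
  (hg : ∀ s : List (Fin 4), s.length ≤ dmax → g s ∈ Set.Icc (0 : ℝ) 1)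
  (hg1 : ∀ s : List (Fin 4), s.length = dmax → g s = 0)
  (hqt : ∀ t s x, 0 < qt t s x)
  (hpix : ∀ i, (pix i).length = dmax)

include hg1 hpix in
theorem Wd_one : ∀ (D : ℕ) (u : List (Fin 4)), u.length + D = dmax → Wd qt v pix g D u 0 = 1 := by
  intro D
  induction D with
  | zero =>
    intro u h
    rw [Wd_zero, Ed_zero, hg1 u (by omega)]
    ring
  | succ D ih =>
    intro u h
    rw [Wd_succ qt v pix g u 0 (fun i => by rw [hpix]; omega), Ed_zero]
    have hc : ∀ j : Fin 4, Wd qt v pix g D (u ++ [j]) 0 = 1 := fun j =>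
      ih (u ++ [j]) (by simp; omega)
    simp only [hc, Finset.prod_const_one]
    ring

include hg hg1 hqt hpix in
theorem Wd_pos (t : ℕ) :
    ∀ (D : ℕ) (u : List (Fin 4)), u.length + D = dmax → 0 < Wd qt v pix g D u t := by
  intro D
  induction D with
  | zero =>
    intro u h
    rw [Wd_zero, hg1 u (by omega)]
    simpa using Ed_pos qt v pix hqt u t
  | succ D ih =>
    intro u h
    rw [Wd_succ qt v pix g u t (fun i => by rw [hpix]; omega)]
    exact mix_pos (hg u (by omega)).1 (hg u (by omega)).2 (Ed_pos qt v pix hqt u t)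
      (Finset.prod_pos fun j _ => ih (u ++ [j]) (by simp; omega))

/-- The main invariant at time `t`. -/
def Pinv (t : ℕ) : Prop :=
  ∀ u : List (Fin 4), u.length < dmax →
    GT dmax qt v pix g t u * Wd qt v pix g (dmax - u.length) u t
      = g u * ∏ j, Wd qt v pix g (dmax - u.length - 1) (u ++ [j]) t

include hg hg1 hqt hpix in
theorem GT_mem {t : ℕ} (hP : Pinv dmax qt v pix g t) :
    ∀ u : List (Fin 4), u.length < dmax → GT dmax qt v pix g t u ∈ Set.Icc (0 : ℝ) 1 := by
  intro u hu
  have hWpos := Wd_pos dmax qt v pix g hg hg1 hqt hpix t (dmax - u.length) u (by omega)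
  have hDeq : dmax - u.length = (dmax - u.length - 1) + 1 := by omega
  have hsucc : Wd qt v pix g (dmax - u.length) u t
      = (1 - g u) * Ed qt v pix u t
        + g u * ∏ j, Wd qt v pix g (dmax - u.length - 1) (u ++ [j]) t := by
    rw [hDeq, Wd_succ qt v pix g u t (fun i => by rw [hpix]; omega)]
    simp
  have hprod : 0 < ∏ j, Wd qt v pix g (dmax - u.length - 1) (u ++ [j]) t :=
    Finset.prod_pos fun j _ =>
      Wd_pos dmax qt v pix g hg hg1 hqt hpix t _ (u ++ [j]) (by simp; omega)
  have hkey := hP u hu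
  have hE := Ed_pos qt v pix hqt u t
  have hg0 := (hg u hu.le).1
  have hg1' := (hg u hu.le).2
  constructor
  · nlinarith [mul_nonneg hg0 hprod.le]
  · nlinarith [mul_nonneg (by linarith : (0:ℝ) ≤ 1 - g u) hE.le]

include hg hg1 hqt hpix in
theorem Qd_pos {t : ℕ} (hP : Pinv dmax qt v pix g t) :
    ∀ j ≤ dmax, 0 < Qd dmax qt v pix (GT dmax qt v pix g t) t j := by
  intro j
  induction j with
  | zero => intro _; simpa [Qd] using hqt t _ (v t)
  | succ j ih =>
    intro hj
    have hu : ((pix t).take (dmax - (j + 1))).length < dmax := by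
      rw [List.length_take, hpix]; omega
    have hmem := GT_mem dmax qt v pix g hg hg1 hqt hpix hP _ hu
    exact mix_pos hmem.1 hmem.2 (hqt _ _ _) (ih (by omega))

include hg hg1 hqt hpix in
theorem stepD {t : ℕ} (hP : Pinv dmax qt v pix g t) :
    ∀ j ≤ dmax, Wd qt v pix g j ((pix t).take (dmax - j)) (t + 1)
      = Wd qt v pix g j ((pix t).take (dmax - j)) t
        * Qd dmax qt v pix (GT dmax qt v pix g t) t j := by
  intro j
  induction j with
  | zero =>
    intro _
    have htk : (pix t).take (dmax - 0) = pix t := List.take_of_length_le (by rw [hpix]; omega)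
    have htk2 : (pix t).take dmax = pix t := List.take_of_length_le (le_of_eq (hpix t))
    simp only [Qd]
    rw [htk, htk2, Wd_zero, Wd_zero, Ed_succ, if_pos (List.prefix_refl _)]
    ring
  | succ j ih =>
    intro hj
    set u : List (Fin 4) := (pix t).take (dmax - (j + 1)) with hu
    have hulen : u.length = dmax - (j + 1) := by rw [hu, List.length_take, hpix]; omega
    have hupre : u <+: pix t := List.take_prefix _ _
    have hidx : dmax - (j + 1) < (pix t).length := by rw [hpix]; omega
    set j0 : Fin 4 := (pix t)[dmax - (j + 1)]'hidx with hj0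
    have hchildtake : u ++ [j0] = (pix t).take (dmax - j) := by
      have h1 : dmax - j = (dmax - (j + 1)) + 1 := by omega
      rw [h1, List.take_succ, hu]
      congr 1
      rw [List.getElem?_eq_getElem hidx]
      rfl
    have hlen' : ∀ i, u.length < (pix i).length := fun i => by rw [hulen, hpix]; omega
    rw [Wd_succ qt v pix g u (t + 1) hlen', Wd_succ qt v pix g u t hlen']
    have hEd : Ed qt v pix u (t + 1) = Ed qt v pix u t * qt t u (v t) := by
      rw [Ed_succ, if_pos hupre]
    have hchild : ∀ j' : Fin 4, Wd qt v pix g j (u ++ [j']) (t + 1)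
        = Wd qt v pix g j (u ++ [j']) t
          * (if j' = j0 then Qd dmax qt v pix (GT dmax qt v pix g t) t j else 1) := by
      intro j'
      by_cases hj' : j' = j0
      · subst hj'
        rw [if_pos rfl, hchildtake]
        exact ih (by omega)
      · rw [if_neg hj', mul_one]
        refine Wd_unchanged qt v pix g _ t fun hc => ?_
        have := ((prefix_snoc_iff u (pix t) j' (hlen' t)).1 hc).2
        apply hj'
        rw [← this, hj0]
        simp only [hulen]
    have hprod : (∏ j' : Fin 4, Wd qt v pix g j (u ++ [j']) (t + 1))
        = (∏ j' : Fin 4, Wd qt v pix g j (u ++ [j']) t)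
          * Qd dmax qt v pix (GT dmax qt v pix g t) t j := by
      rw [Finset.prod_congr rfl fun j' _ => hchild j', Finset.prod_mul_distrib]
      congr 1
      simp
    rw [hEd, hprod]
    have hQ : Qd dmax qt v pix (GT dmax qt v pix g t) t (j + 1)
        = (1 - GT dmax qt v pix g t u) * qt t u (v t)
          + GT dmax qt v pix g t u * Qd dmax qt v pix (GT dmax qt v pix g t) t j := rfl
    rw [hQ]
    have hkey := hP u (by omega)
    rw [hulen] at hkey
    have h2 : dmax - (dmax - (j + 1)) = j + 1 := by omega
    rw [h2] at hkey
    simp only [Nat.add_sub_cancel] at hkey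
    have hsucc : Wd qt v pix g (j + 1) u t
        = (1 - g u) * Ed qt v pix u t + g u * ∏ j', Wd qt v pix g j (u ++ [j']) t :=
      Wd_succ qt v pix g u t hlen'
    linear_combination
      (-(qt t u (v t) - Qd dmax qt v pix (GT dmax qt v pix g t) t j)
          * GT dmax qt v pix g t u) * hsucc
        + (qt t u (v t) - Qd dmax qt v pix (GT dmax qt v pix g t) t j) * hkey

end Main

section Main2

variable {V : Type} [Fintype V]
  (dmax : ℕ) (qt : ℕ → List (Fin 4) → V → ℝ) (v : ℕ → V) (pix : ℕ → List (Fin 4))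
  (g : List (Fin 4) → ℝ)
  (hg : ∀ s : List (Fin 4), s.length ≤ dmax → g s ∈ Set.Icc (0 : ℝ) 1)
  (hg1 : ∀ s : List (Fin 4), s.length = dmax → g s = 0)
  (hqt : ∀ t s x, 0 < qt t s x)
  (hpix : ∀ i, (pix i).length = dmax)

include hg hg1 hqt hpix in
theorem mainP : ∀ t : ℕ, Pinv dmax qt v pix g t := by
  intro t
  induction t with
  | zero =>
    intro u hu
    simp only [GT]
    rw [Wd_one dmax qt v pix g hg1 hpix (dmax - u.length) u (by omega)]
    have hc : ∀ j : Fin 4, Wd qt v pix g (dmax - u.length - 1) (u ++ [j]) 0 = 1 := fun j =>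
      Wd_one dmax qt v pix g hg1 hpix _ (u ++ [j]) (by simp; omega)
    simp [hc]
  | succ t ih =>
    have hstep := stepD dmax qt v pix g hg hg1 hqt hpix ih
    have hQpos := Qd_pos dmax qt v pix g hg hg1 hqt hpix ih
    intro u hu
    simp only [GT]
    by_cases hc : u <+: pix t
    · have hutk : u = (pix t).take u.length := List.prefix_iff_eq_take.1 hc
      have hutake : u = (pix t).take (dmax - (dmax - u.length)) := by
        have h1 : dmax - (dmax - u.length) = u.length := by omega
        rw [h1]; exact hutk
      rw [Gnext, if_pos ⟨hc, hu⟩]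
      have hW : Wd qt v pix g (dmax - u.length) u (t + 1)
          = Wd qt v pix g (dmax - u.length) u t
            * Qd dmax qt v pix (GT dmax qt v pix g t) t (dmax - u.length) := by
        have hW0 := hstep (dmax - u.length) (by omega)
        rw [show dmax - (dmax - u.length) = u.length from by omega, ← hutk] at hW0
        exact hW0
      have hidx : u.length < (pix t).length := by rw [hpix]; omega
      have hchildtake : u ++ [(pix t)[u.length]'hidx]
          = (pix t).take (dmax - (dmax - u.length - 1)) := by
        have h1 : dmax - (dmax - u.length - 1) = u.length + 1 := by omega
        rw [h1, List.take_succ, List.getElem?_eq_getElem hidx]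
        congr 1
      have hchild : ∀ j' : Fin 4,
          Wd qt v pix g (dmax - u.length - 1) (u ++ [j']) (t + 1)
            = Wd qt v pix g (dmax - u.length - 1) (u ++ [j']) t
              * (if j' = (pix t)[u.length]'hidx then
                  Qd dmax qt v pix (GT dmax qt v pix g t) t (dmax - u.length - 1) else 1) := by
        intro j'
        by_cases hj' : j' = (pix t)[u.length]'hidx
        · subst hj'
          rw [if_pos rfl, hchildtake]
          exact hstep (dmax - u.length - 1) (by omega)
        · rw [if_neg hj', mul_one]
          refine Wd_unchanged qt v pix g _ t fun hcc => ?_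
          exact hj' ((prefix_snoc_iff u (pix t) j' hidx).1 hcc).2.symm
      have hprod : (∏ j' : Fin 4, Wd qt v pix g (dmax - u.length - 1) (u ++ [j']) (t + 1))
          = (∏ j' : Fin 4, Wd qt v pix g (dmax - u.length - 1) (u ++ [j']) t)
            * Qd dmax qt v pix (GT dmax qt v pix g t) t (dmax - u.length - 1) := by
        rw [Finset.prod_congr rfl fun j' _ => hchild j', Finset.prod_mul_distrib]
        congr 1
        simp
      rw [hW, hprod]
      have hkey := ih u hu
      have hBne : Qd dmax qt v pix (GT dmax qt v pix g t) t (dmax - u.length) ≠ 0 :=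
        (hQpos _ (by omega)).ne'
      rw [div_mul_eq_mul_div, div_eq_iff hBne]
      linear_combination (Qd dmax qt v pix (GT dmax qt v pix g t) t (dmax - u.length - 1)
        * Qd dmax qt v pix (GT dmax qt v pix g t) t (dmax - u.length)) * hkey
    · rw [Gnext, if_neg (by tauto)]
      rw [Wd_unchanged qt v pix g u t hc]
      have hch : ∀ j' : Fin 4, Wd qt v pix g (dmax - u.length - 1) (u ++ [j']) (t + 1)
          = Wd qt v pix g (dmax - u.length - 1) (u ++ [j']) t := fun j' =>
        Wd_unchanged qt v pix g _ t fun hcc => hc ((u.prefix_append [j']).trans hcc)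
      rw [Finset.prod_congr rfl fun j' _ => hch j']
      exact ih u hu

end Main2

/-- Theorem 1.  Blocks of the `2^dmax × 2^dmax` grid are encoded by their
quadrant paths `List (Fin 4)` of length `≤ dmax` (the root block `s_λ` is `[]`, singleton
blocks are paths of length `dmax`), pixels by paths of full length `dmax`, and `pix t` is
the pixel scanned at time `t` (an injective raster-scan enumeration of the `4^dmax` pixels).
With model prior `p(m) = weight g [] m = ∏_{s ∈ L^m} (1-g_s) ∏_{s' ∈ I^m} g_{s'}`,
likelihood `p(v^{t-1} | m) = like dmax qt v pix m t`, and posterior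
`p(m | v^{t-1}) = p(m) p(v^{t-1} | m) / ∑_{m'} p(m') p(v^{t-1} | m')`, the Bayes optimal
coding probability `q*(v_t | v^{t-1}) = ∑_m p(m | v^{t-1}) q̃(v_t | v^{t-1}, s_m(t))`
equals the value `q(v_t | v^{t-1}, s_λ)` computed by the recursive algorithm at the
root block. -/
theorem stmt8 (dmax : ℕ) (V : Type) [Fintype V]
    (g : List (Fin 4) → ℝ)
    (hg : ∀ s : List (Fin 4), s.length ≤ dmax → g s ∈ Set.Icc (0 : ℝ) 1)
    (hg1 : ∀ s : List (Fin 4), s.length = dmax → g s = 0)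
    (qt : ℕ → List (Fin 4) → V → ℝ)
    (hqt : ∀ t s x, 0 < qt t s x)
    (hqts : ∀ t s, ∑ x : V, qt t s x = 1)
    (v : ℕ → V) (pix : ℕ → List (Fin 4))
    (hpix : ∀ i, (pix i).length = dmax)
    (hinj : ∀ i j, i < 4 ^ dmax → j < 4 ^ dmax → pix i = pix j → i = j)
    (t : ℕ) (ht : t < 4 ^ dmax) :
    (∑ m : FullTree 4 dmax,
        (FullTree.weight g [] m * like dmax qt v pix m t
            / ∑ m' : FullTree 4 dmax, FullTree.weight g [] m' * like dmax qt v pix m' t)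
          * qt t (FullTree.leafOf [] m (pix t)) (v t))
      = Qd dmax qt v pix (GT dmax qt v pix g t) t dmax := by
  have hW : ∀ t' : ℕ, Wd qt v pix g dmax [] t'
      = ∑ m : FullTree 4 dmax, FullTree.weight g [] m * like dmax qt v pix m t' := by
    intro t'
    unfold Wd Ld like
    refine Finset.sum_congr rfl fun m _ => ?_
    congr 1
  have hpos : 0 < Wd qt v pix g dmax [] t :=
    Wd_pos dmax qt v pix g hg hg1 hqt hpix t dmax [] (by simp)
  have hnum : (∑ m : FullTree 4 dmax, FullTree.weight g [] m * like dmax qt v pix m t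
        * qt t (FullTree.leafOf [] m (pix t)) (v t)) = Wd qt v pix g dmax [] (t + 1) := by
    rw [hW (t + 1)]
    refine Finset.sum_congr rfl fun m _ => ?_
    rw [show like dmax qt v pix m (t + 1) = like dmax qt v pix m t
      * qt t (FullTree.leafOf [] m (pix t)) (v t) from Finset.prod_range_succ _ _]
    ring
  have hstep := stepD dmax qt v pix g hg hg1 hqt hpix
    (mainP dmax qt v pix g hg hg1 hqt hpix t) dmax (le_refl dmax)
  rw [show (pix t).take (dmax - dmax) = ([] : List (Fin 4)) from by simp] at hstep
  simp only [div_mul_eq_mul_div]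
  rw [← Finset.sum_div, ← hW t, hnum, hstep]
  exact mul_div_cancel_left₀ _ hpos.ne'
end
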